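/- Let S : ℝ → ℂ satisfy S(x)·S(−x) = 1 for all x ∈ ℝ, let n ∈ ℕ, and for f : ℝⁿ → ℂ define the S-symmetrization (Sym_S f)(θ) := (1/n!) Σ_{σ ∈ S_n} S^σ(θ) f(θ^σ). Then for every f : ℝⁿ → ℂ: (a) Sym_S(Sym_S f) = Sym_S f (Sym_S is idempotent), and (b) Sym_S f is S-symmetric, i.e. for every permutation π of {1,…,n} and all θ ∈ ℝⁿ, (Sym_S f)(θ) = S^π(θ) · (Sym_S f)(θ^π). -/

import Mathlib

/-- The S-factor `S^σ(θ) = ∏_{i<j, σ(i)>σ(j)} S(θ_{σ(i)} − θ_{σ(j)})`. -/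
noncomputable def Sperm (S : ℝ → ℂ) {n : ℕ} (σ : Equiv.Perm (Fin n)) (θ : Fin n → ℝ) : ℂ :=
  ∏ p ∈ Finset.univ.filter (fun p : Fin n × Fin n => p.1 < p.2 ∧ σ p.2 < σ p.1),
    S (θ (σ p.1) - θ (σ p.2))

/-- The S-symmetrization `(Sym_S f)(θ) = (1/n!) Σ_σ S^σ(θ) f(θ^σ)`. -/
noncomputable def SymS (S : ℝ → ℂ) {n : ℕ} (f : (Fin n → ℝ) → ℂ) : (Fin n → ℝ) → ℂ :=
  fun θ => (1 / (n.factorial : ℂ)) *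
    ∑ σ : Equiv.Perm (Fin n), Sperm S σ θ * f (fun i => θ (σ i))

lemma sperm_eq (S : ℝ → ℂ) {n : ℕ} (σ : Equiv.Perm (Fin n)) (θ : Fin n → ℝ) :
    Sperm S σ θ = ∏ p ∈ Finset.univ.filter (fun p : Fin n × Fin n => p.1 < p.2),
      (if σ p.2 < σ p.1 then S (θ (σ p.1) - θ (σ p.2)) else 1) := by
  rw [Sperm, ← Finset.filter_filter, Finset.prod_filter]

lemma sperm_cocycle (S : ℝ → ℂ) (hS : ∀ x : ℝ, S x * S (-x) = 1) {n : ℕ}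
    (π σ : Equiv.Perm (Fin n)) (θ : Fin n → ℝ) :
    Sperm S (π * σ) θ = Sperm S π θ * Sperm S σ (fun i => θ (π i)) := by
  rw [sperm_eq, sperm_eq, sperm_eq]
  set P := Finset.univ.filter (fun p : Fin n × Fin n => p.1 < p.2) with hP
  have memP : ∀ p : Fin n × Fin n, p ∈ P ↔ p.1 < p.2 := by
    intro p; simp [hP]
  set Ksym : Fin n → Fin n → ℂ := fun a b =>
    if a < b then (if π b < π a then S (θ (π a) - θ (π b)) else 1)
    else (if π a < π b then S (θ (π b) - θ (π a)) else 1) with hK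
  have hπ : (∏ p ∈ P, if π p.2 < π p.1 then S (θ (π p.1) - θ (π p.2)) else 1)
      = ∏ p ∈ P, Ksym (σ p.1) (σ p.2) := by
    refine (Finset.prod_bij'
      (fun p _ => if σ⁻¹ p.1 < σ⁻¹ p.2 then (σ⁻¹ p.1, σ⁻¹ p.2) else (σ⁻¹ p.2, σ⁻¹ p.1))
      (fun p _ => if σ p.1 < σ p.2 then (σ p.1, σ p.2) else (σ p.2, σ p.1))
      ?_ ?_ ?_ ?_ ?_)
    · intro p hp
      rw [memP] at hp ⊢
      by_cases h : σ⁻¹ p.1 < σ⁻¹ p.2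
      · simp only [h, if_true]
      · simp only [h, if_false]
        refine lt_of_le_of_ne (not_lt.mp h) ?_
        exact fun e => absurd (σ⁻¹.injective e) (ne_of_lt hp).symm
    · intro p hp
      rw [memP] at hp ⊢
      by_cases h : σ p.1 < σ p.2
      · simpa [h]
      · simp only [h, if_false]
        refine lt_of_le_of_ne (not_lt.mp h) ?_
        exact fun e => absurd (σ.injective e) (ne_of_lt hp).symm
    · intro p hp
      rw [memP] at hp
      by_cases h : σ⁻¹ p.1 < σ⁻¹ p.2 <;> rw [Equiv.Perm.inv_def] at h <;>
        simp [h, hp, lt_asymm hp]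
    · intro p hp
      rw [memP] at hp
      by_cases h : σ p.1 < σ p.2 <;>
        simp [h, hp, lt_asymm hp]
    · intro p hp
      rw [memP] at hp
      by_cases h : σ⁻¹ p.1 < σ⁻¹ p.2 <;> rw [Equiv.Perm.inv_def] at h <;>
        simp [hK, h, hp, lt_asymm hp]
  rw [hπ, ← Finset.prod_mul_distrib]
  refine Finset.prod_congr rfl ?_
  intro p hp
  rw [memP] at hp
  have hne : σ p.1 ≠ σ p.2 := fun e => absurd (σ.injective e) (ne_of_lt hp)
  have hπne : π (σ p.1) ≠ π (σ p.2) := fun e => absurd (π.injective e) hne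
  simp only [Equiv.Perm.mul_apply, hK]
  by_cases h1 : σ p.1 < σ p.2
  · have h2 : ¬ σ p.2 < σ p.1 := not_lt.mpr h1.le
    by_cases h3 : π (σ p.2) < π (σ p.1) <;> simp [h1, h2, h3]
  · have h2 : σ p.2 < σ p.1 := lt_of_le_of_ne (not_lt.mp h1) hne.symm
    by_cases h3 : π (σ p.2) < π (σ p.1)
    · simp [h1, h2, h3, not_lt.mpr h3.le]
    · have h4 : π (σ p.1) < π (σ p.2) := lt_of_le_of_ne (not_lt.mp h3) hπne
      simp only [h1, if_false, h2, if_true, h3, h4]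
      rw [show θ (π (σ p.2)) - θ (π (σ p.1)) = -(θ (π (σ p.1)) - θ (π (σ p.2))) by ring,
        mul_comm]
      exact (hS _).symm

/-- `Sym_S` is idempotent and its image consists of S-symmetric functions. -/
theorem symS_idempotent_and_symmetric (S : ℝ → ℂ) (hS : ∀ x : ℝ, S x * S (-x) = 1)
    (n : ℕ) (f : (Fin n → ℝ) → ℂ) :
    SymS S (SymS S f) = SymS S f ∧
    ∀ (π : Equiv.Perm (Fin n)) (θ : Fin n → ℝ),
      SymS S f θ = Sperm S π θ * SymS S f (fun i => θ (π i)) := by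
  have hsym : ∀ (π : Equiv.Perm (Fin n)) (θ : Fin n → ℝ),
      SymS S f θ = Sperm S π θ * SymS S f (fun i => θ (π i)) := by
    intro π θ
    simp only [SymS]
    rw [Finset.mul_sum, Finset.mul_sum]
    symm
    rw [Finset.mul_sum]
    refine Fintype.sum_bijective (fun σ : Equiv.Perm (Fin n) => π * σ)
      (Group.mulLeft_bijective π)
      (fun σ => Sperm S π θ *
        (1 / (n.factorial : ℂ) * ((Sperm S σ fun i => θ (π i)) * f fun j => θ (π (σ j)))))
      (fun σ => 1 / (n.factorial : ℂ) * (Sperm S σ θ * f fun j => θ (σ j)))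
      fun σ => ?_
    simp only [Equiv.Perm.mul_apply]
    rw [sperm_cocycle S hS π σ θ]
    ring
  refine ⟨?_, hsym⟩
  funext θ
  have h1 : SymS S (SymS S f) θ
      = (1 / (n.factorial : ℂ)) * ∑ _σ : Equiv.Perm (Fin n), SymS S f θ := by
    simp only [SymS]
    congr 1
    refine Finset.sum_congr rfl fun σ _ => ?_
    have := hsym σ θ
    simp only [SymS] at this ⊢
    exact this.symm
  rw [h1, Finset.sum_const, Finset.card_univ, Fintype.card_perm, Fintype.card_fin,
    nsmul_eq_mul]
  have hc : (n.factorial : ℂ) ≠ 0 := Nat.cast_ne_zero.mpr n.factorial_ne_zero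
  field_simp
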